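/- Let Q be a positive semidefinite operator supported on the antisymmetric subspace H₋ of H⊗H, and let Q̃ = tr₁(Q) + tr₂(Q). Then Q̃² ≤ (1/2)·tr(Q̃)·Q̃ as operators. -/

import Mathlib

open Matrix Kronecker ComplexOrder BigOperators

/-- The swap operator `V` on `ℂ^d ⊗ ℂ^d`, `V(x ⊗ y) = y ⊗ x`. -/
noncomputable def swapOp (d : ℕ) : Matrix (Fin d × Fin d) (Fin d × Fin d) ℂ :=
  fun p q => if p.1 = q.2 ∧ p.2 = q.1 then 1 else 0

/-- Projector onto the symmetric subspace of `ℂ^d ⊗ ℂ^d`. -/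
noncomputable def Pplus (d : ℕ) : Matrix (Fin d × Fin d) (Fin d × Fin d) ℂ :=
  (2 : ℂ)⁻¹ • (1 + swapOp d)

/-- Projector onto the antisymmetric subspace of `ℂ^d ⊗ ℂ^d`. -/
noncomputable def Pminus (d : ℕ) : Matrix (Fin d × Fin d) (Fin d × Fin d) ℂ :=
  (2 : ℂ)⁻¹ • (1 - swapOp d)

/-- Partial trace over the first tensor factor. -/
noncomputable def ptr1 {d : ℕ} (Q : Matrix (Fin d × Fin d) (Fin d × Fin d) ℂ) :
    Matrix (Fin d) (Fin d) ℂ :=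
  fun j k => ∑ i, Q (i, j) (i, k)

/-- Partial trace over the second tensor factor. -/
noncomputable def ptr2 {d : ℕ} (Q : Matrix (Fin d × Fin d) (Fin d × Fin d) ℂ) :
    Matrix (Fin d) (Fin d) ℂ :=
  fun i j => ∑ k, Q (i, k) (j, k)

section Aux
open Finset
lemma swap_herm (d : ℕ) : (swapOp d)ᴴ = swapOp d := by
  ext p q
  simp only [conjTranspose_apply, swapOp]
  split_ifs with h1 h2 h2 <;> simp_all <;> tauto

lemma swap_mul_swap (d : ℕ) : swapOp d * swapOp d = 1 := by
  ext p q
  rw [mul_apply, Finset.sum_eq_single (p.2, p.1)]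
  · simp [swapOp, one_apply, Prod.ext_iff, and_comm]
  · intro r _ hr
    simp only [swapOp]
    rw [if_neg, zero_mul]
    rintro ⟨h1, h2⟩
    exact hr (by ext <;> simp [← h1, ← h2])
  · simp

lemma Pm_herm (d : ℕ) : (Pminus d)ᴴ = Pminus d := by
  simp [Pminus, conjTranspose_smul, swap_herm, Complex.ext_iff]

lemma Pm_idem (d : ℕ) : Pminus d * Pminus d = Pminus d := by
  have h : (1 - swapOp d) * (1 - swapOp d) = (2 : ℂ) • (1 - swapOp d) := by
    rw [sub_mul, mul_sub, mul_sub, one_mul, mul_one, swap_mul_swap, two_smul]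
    simp only [one_mul, mul_one]
    abel
  rw [Pminus, smul_mul_assoc, mul_smul_comm, h, smul_smul, smul_smul]
  norm_num


variable {n : Type*} [Fintype n] [DecidableEq n]

lemma trace_nonneg_of_psd {M : Matrix n n ℂ} (hM : M.PosSemidef) : 0 ≤ M.trace := by
  rw [Matrix.trace]
  apply Finset.sum_nonneg
  intro i _
  have := hM.dotProduct_mulVec_nonneg (Pi.single i 1)
  simpa [dotProduct, Matrix.mulVec, Pi.single_apply, Finset.sum_ite_eq, Finset.sum_ite_eq',
    Matrix.diag] using this

lemma trace_mul_psd_nonneg {M N : Matrix n n ℂ} (hM : M.PosSemidef) (hN : N.PosSemidef) :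
    0 ≤ (M * N).trace := by
  have key : ∀ S : Matrix n n ℂ, Sᴴ = S → S * S = M → 0 ≤ (M * N).trace := by
    intro S hSh hSM
    have h2 := hN.conjTranspose_mul_mul_same S
    rw [hSh] at h2
    rw [← hSM, mul_assoc, Matrix.trace_mul_comm]
    exact trace_nonneg_of_psd h2
  open scoped MatrixOrder in
  exact key (CFC.sqrt M) (CFC.sqrt_nonneg M).posSemidef.isHermitian.eq
    (CFC.sqrt_mul_sqrt_self M hM.nonneg)

lemma dot_self_real (v : n → ℂ) :
    star v ⬝ᵥ v = ((∑ i, Complex.normSq (v i) : ℝ) : ℂ) := by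
  push_cast
  simp [dotProduct, Complex.normSq_eq_conj_mul_self, Pi.star_apply, RCLike.star_def]

lemma trace_herm_real {M : Matrix n n ℂ} (hM : M.IsHermitian) : star M.trace = M.trace := by
  rw [← Matrix.trace_conjTranspose, hM.eq]


lemma sum_conj_mul_self {d : ℕ} (a : Fin d → ℂ) :
    ∑ i, (starRingEnd ℂ) (a i) * a i = ((∑ i, Complex.normSq (a i) : ℝ) : ℂ) := by
  push_cast
  exact Finset.sum_congr rfl fun i _ => by rw [Complex.normSq_eq_conj_mul_self]

lemma bessel2 {d : ℕ} (x y z : Fin d → ℂ)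
    (hxy : ∑ i, (starRingEnd ℂ) (x i) * y i = 0)
    (hx : ∑ i, Complex.normSq (x i) = 1) (hy : ∑ i, Complex.normSq (y i) = 1) :
    Complex.normSq (∑ i, (starRingEnd ℂ) (x i) * z i)
      + Complex.normSq (∑ i, (starRingEnd ℂ) (y i) * z i)
      ≤ ∑ i, Complex.normSq (z i) := by
  let E := EuclideanSpace ℂ (Fin d)
  let x' : E := (WithLp.equiv 2 _).symm x
  let y' : E := (WithLp.equiv 2 _).symm y
  let z' : E := (WithLp.equiv 2 _).symm z
  have hinner : ∀ a b : Fin d → ℂ,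
      (inner ℂ ((WithLp.equiv 2 _).symm a : E) ((WithLp.equiv 2 _).symm b) : ℂ)
        = ∑ i, (starRingEnd ℂ) (a i) * b i := by
    intro a b
    simp [PiLp.inner_apply, RCLike.inner_apply, mul_comm]
  have hnormsq : ∀ a : Fin d → ℂ,
      ‖((WithLp.equiv 2 _).symm a : E)‖ ^ 2 = ∑ i, Complex.normSq (a i) := by
    intro a
    rw [EuclideanSpace.norm_eq, Real.sq_sqrt (by positivity)]
    simp [Complex.sq_norm]
  have hyx : ∑ i, (starRingEnd ℂ) (y i) * x i = 0 := by
    have h : ∑ i, (starRingEnd ℂ) (y i) * x i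
        = (starRingEnd ℂ) (∑ i, (starRingEnd ℂ) (x i) * y i) := by
      rw [map_sum]
      exact Finset.sum_congr rfl fun i _ => by
        rw [_root_.map_mul, Complex.conj_conj]; ring
    rw [h, hxy, map_zero]
  have hon : Orthonormal ℂ ![x', y'] := by
    rw [orthonormal_iff_ite]
    intro i j
    fin_cases i <;> fin_cases j <;>
        simp only [Matrix.cons_val_zero, Matrix.cons_val_one, Matrix.head_cons, x', y', hinner,
          Fin.mk_one, Fin.zero_eta, Fin.isValue] <;>
      norm_num
    · rw [sum_conj_mul_self, hx]; norm_num
    · exact hxy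
    · exact hyx
    · rw [sum_conj_mul_self, hy]; norm_num
  have hb := hon.sum_inner_products_le (s := Finset.univ) z'
  rw [Fin.sum_univ_two] at hb
  simp only [Matrix.cons_val_zero, Matrix.cons_val_one, Matrix.head_cons] at hb
  rw [hnormsq z] at hb
  rw [hinner x z, hinner y z] at hb
  simpa [Complex.sq_norm] using hb


lemma cs_sum {d : ℕ} (p q : Fin d → ℂ) :
    Complex.normSq (∑ i, p i * q i)
      ≤ (∑ i, Complex.normSq (p i)) * (∑ i, Complex.normSq (q i)) := by
  let E := EuclideanSpace ℂ (Fin d)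
  let p' : E := (WithLp.equiv 2 _).symm (fun i => (starRingEnd ℂ) (p i))
  let q' : E := (WithLp.equiv 2 _).symm q
  have h1 : (inner ℂ p' q' : ℂ) = ∑ i, p i * q i := by
    rw [EuclideanSpace.inner_eq_star_dotProduct]
    simp [dotProduct, p', q', mul_comm]
  have h2 := norm_inner_le_norm (𝕜 := ℂ) p' q'
  have h3 : Complex.normSq (inner ℂ p' q' : ℂ) ≤ ‖p'‖ ^ 2 * ‖q'‖ ^ 2 := by
    rw [← Complex.sq_norm]
    calc ‖(inner ℂ p' q' : ℂ)‖ ^ 2 ≤ (‖p'‖ * ‖q'‖) ^ 2 := by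
          apply pow_le_pow_left₀ (by positivity) h2
      _ = ‖p'‖ ^ 2 * ‖q'‖ ^ 2 := by ring
  rw [h1] at h3
  have hnp : ‖p'‖ ^ 2 = ∑ i, Complex.normSq (p i) := by
    rw [EuclideanSpace.norm_eq, Real.sq_sqrt (by positivity)]
    simp [p', Complex.sq_norm]
  have hnq : ‖q'‖ ^ 2 = ∑ i, Complex.normSq (q i) := by
    rw [EuclideanSpace.norm_eq, Real.sq_sqrt (by positivity)]
    simp [q', Complex.sq_norm]
  rwa [hnp, hnq] at h3

lemma core {d : ℕ} (M : Matrix (Fin d) (Fin d) ℂ) (hM : ∀ i j, M j i = - M i j)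
    (u : Fin d → ℂ) :
    2 * ∑ k, Complex.normSq (∑ j, u j * M j k) ≤
      (∑ i, Complex.normSq (u i)) * ∑ p, ∑ q, Complex.normSq (M p q) := by
  set a : Fin d → ℂ := fun k => ∑ j, u j * M j k with ha
  set α : ℝ := ∑ k, Complex.normSq (a k) with hα
  set β : ℝ := ∑ i, Complex.normSq (u i) with hβ
  set F : ℝ := ∑ p, ∑ q, Complex.normSq (M p q) with hF
  have hα0 : 0 ≤ α := Finset.sum_nonneg fun i _ => Complex.normSq_nonneg _
  have hβ0 : 0 ≤ β := Finset.sum_nonneg fun i _ => Complex.normSq_nonneg _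
  have hF0 : 0 ≤ F := Finset.sum_nonneg fun i _ =>
    Finset.sum_nonneg fun j _ => Complex.normSq_nonneg _
  rcases eq_or_lt_of_le hα0 with hzero | hαpos
  · rw [← hzero]
    norm_num
    exact mul_nonneg hβ0 hF0
  have hβpos : 0 < β := by
    rcases eq_or_lt_of_le hβ0 with hz | h
    · exfalso
      have hu : ∀ i, u i = 0 := by
        intro i
        exact Complex.normSq_eq_zero.mp
          (Finset.sum_eq_zero_iff_of_nonneg
            (fun i _ => Complex.normSq_nonneg (u i)) |>.mp hz.symm i (by simp))
      have h0 : α = 0 := by simp [hα, ha, hu]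
      linarith
    · exact h
  have F1 : ∑ k, u k * a k = 0 := by
    have h2 : ∑ k, u k * a k = - ∑ k, u k * a k := by
      calc ∑ k, u k * a k = ∑ j, ∑ k, u k * (u j * M j k) := by
            simp only [ha, Finset.mul_sum]
            exact Finset.sum_comm
        _ = - ∑ k, u k * a k := by
            rw [← Finset.sum_neg_distrib]
            refine Finset.sum_congr rfl fun j _ => ?_
            have haj : a j = ∑ k, u k * M k j := rfl
            rw [haj, Finset.mul_sum, ← Finset.sum_neg_distrib]
            refine Finset.sum_congr rfl fun k _ => ?_
            rw [hM j k]
            ring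
    linear_combination h2 / 2
  set b : Fin d → ℂ := fun k => ∑ j, (starRingEnd ℂ) (a j) * M j k with hb
  have F2 : ∑ j, u j * b j = -(α : ℂ) := by
    calc ∑ j, u j * b j = ∑ i, ∑ j, u j * ((starRingEnd ℂ) (a i) * M i j) := by
          simp only [hb, Finset.mul_sum]
          exact Finset.sum_comm
      _ = ∑ i, -((starRingEnd ℂ) (a i) * a i) := by
          refine Finset.sum_congr rfl fun i _ => ?_
          have hai : a i = ∑ j, u j * M j i := rfl
          rw [hai, Finset.mul_sum, ← Finset.sum_neg_distrib]
          refine Finset.sum_congr rfl fun j _ => ?_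
          rw [hM i j]
          ring
      _ = -(α : ℂ) := by
          rw [Finset.sum_neg_distrib, sum_conj_mul_self, hα]
  set sb : ℝ := ∑ k, Complex.normSq (b k) with hsb
  have hcs : α ^ 2 ≤ β * sb := by
    have h := cs_sum u b
    rw [F2, Complex.normSq_neg, Complex.normSq_ofReal] at h
    calc α ^ 2 = α * α := sq α
      _ ≤ β * sb := h
  -- Bessel step
  set c1 : ℝ := (Real.sqrt β)⁻¹ with hc1
  set c2 : ℝ := (Real.sqrt α)⁻¹ with hc2
  set xh : Fin d → ℂ := fun i => (c1 : ℂ) * (starRingEnd ℂ) (u i) with hxh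
  set yh : Fin d → ℂ := fun i => (c2 : ℂ) * a i with hyh
  have hsqβ : Real.sqrt β ≠ 0 := by positivity
  have hsqα : Real.sqrt α ≠ 0 := by positivity
  have hxy : ∑ i, (starRingEnd ℂ) (xh i) * yh i = 0 := by
    have : ∀ i, (starRingEnd ℂ) (xh i) * yh i = ((c1 * c2 : ℝ) : ℂ) * (u i * a i) := by
      intro i
      simp only [hxh, hyh, _root_.map_mul, Complex.conj_conj, Complex.conj_ofReal]
      push_cast
      ring
    rw [Finset.sum_congr rfl fun i _ => this i, ← Finset.mul_sum, F1, mul_zero]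
  have hxn : ∑ i, Complex.normSq (xh i) = 1 := by
    have : ∀ i, Complex.normSq (xh i) = c1 ^ 2 * Complex.normSq (u i) := by
      intro i
      simp only [hxh, Complex.normSq_mul, Complex.normSq_ofReal, Complex.normSq_conj]
      ring
    rw [Finset.sum_congr rfl fun i _ => this i, ← Finset.mul_sum, ← hβ, hc1]
    rw [← Real.sqrt_inv, Real.sq_sqrt (by positivity)]
    field_simp
  have hyn : ∑ i, Complex.normSq (yh i) = 1 := by
    have : ∀ i, Complex.normSq (yh i) = c2 ^ 2 * Complex.normSq (a i) := by
      intro i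
      simp only [hyh, Complex.normSq_mul, Complex.normSq_ofReal]
      ring
    rw [Finset.sum_congr rfl fun i _ => this i, ← Finset.mul_sum, ← hα, hc2]
    rw [← Real.sqrt_inv, Real.sq_sqrt (by positivity)]
    field_simp
  have hmain : β⁻¹ * α + α⁻¹ * sb ≤ F := by
    have hper : ∀ k, β⁻¹ * Complex.normSq (a k) + α⁻¹ * Complex.normSq (b k)
        ≤ ∑ j, Complex.normSq (M j k) := by
      intro k
      have hB := bessel2 xh yh (fun j => M j k) hxy hxn hyn
      have e1 : ∑ i, (starRingEnd ℂ) (xh i) * M i k = (c1 : ℂ) * a k := by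
        rw [ha, Finset.mul_sum]
        refine Finset.sum_congr rfl fun i _ => ?_
        simp only [hxh, _root_.map_mul, Complex.conj_conj, Complex.conj_ofReal]
        ring
      have e2 : ∑ i, (starRingEnd ℂ) (yh i) * M i k = (c2 : ℂ) * b k := by
        rw [hb, Finset.mul_sum]
        refine Finset.sum_congr rfl fun i _ => ?_
        simp only [hyh, _root_.map_mul, Complex.conj_ofReal]
        ring
      rw [e1, e2, Complex.normSq_mul, Complex.normSq_mul, Complex.normSq_ofReal,
        Complex.normSq_ofReal] at hB
      have ec1 : c1 * c1 = β⁻¹ := by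
        rw [hc1, ← mul_inv, Real.mul_self_sqrt hβ0]
      have ec2 : c2 * c2 = α⁻¹ := by
        rw [hc2, ← mul_inv, Real.mul_self_sqrt hα0]
      rw [ec1, ec2] at hB
      exact hB
    have hsum := Finset.sum_le_sum (fun k (_ : k ∈ Finset.univ) => hper k)
    rw [Finset.sum_add_distrib, ← Finset.mul_sum, ← Finset.mul_sum, ← hα, ← hsb] at hsum
    have hswap : ∑ k, ∑ j, Complex.normSq (M j k) = F := by
      rw [hF]
      exact Finset.sum_comm
    rwa [hswap] at hsum
  have e : β * (β⁻¹ * α + α⁻¹ * sb) = α + α⁻¹ * (β * sb) := by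
    field_simp
  have h1 := mul_le_mul_of_nonneg_left hmain hβ0
  rw [e] at h1
  have h4 : α ≤ α⁻¹ * (β * sb) := by
    have h5 := mul_le_mul_of_nonneg_left hcs (inv_nonneg.mpr hα0)
    calc α = α⁻¹ * α ^ 2 := by
          rw [pow_two, ← mul_assoc, inv_mul_cancel₀ hαpos.ne', one_mul]
      _ ≤ α⁻¹ * (β * sb) := h5
  linarith


noncomputable def Tm {d : ℕ} (x : Fin d → ℂ) :
    Matrix (Fin d × Fin d) (Fin d × Fin d) ℂ :=
  fun p q => (if p.2 = q.2 then x p.1 * (starRingEnd ℂ) (x q.1) else 0)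
    + (if p.1 = q.1 then x p.2 * (starRingEnd ℂ) (x q.2) else 0)

variable {d : ℕ}

lemma trace_mul_expand (Q R : Matrix (Fin d × Fin d) (Fin d × Fin d) ℂ) :
    (Q * R).trace = ∑ p, ∑ q, Q p q * R q p := by
  simp [Matrix.trace, Matrix.mul_apply, Matrix.diag]

lemma Tm_herm (x : Fin d → ℂ) : (Tm x)ᴴ = Tm x := by
  ext p q
  simp only [conjTranspose_apply, Tm, star_add]
  congr 1
  · by_cases h : p.2 = q.2
    · rw [if_pos h.symm, if_pos h]
      simp [mul_comm]
    · rw [if_neg (fun hh => h hh.symm), if_neg h, star_zero]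
  · by_cases h : p.1 = q.1
    · rw [if_pos h.symm, if_pos h]
      simp [mul_comm]
    · rw [if_neg (fun hh => h hh.symm), if_neg h, star_zero]

lemma trace_mul_Tm (Q : Matrix (Fin d × Fin d) (Fin d × Fin d) ℂ) (x : Fin d → ℂ) :
    (Q * Tm x).trace
      = (∑ i, ∑ k, ∑ j, Q (i,k) (j,k) * (x j * (starRingEnd ℂ) (x i)))
        + (∑ i, ∑ k, ∑ l, Q (i,k) (i,l) * (x l * (starRingEnd ℂ) (x k))) := by
  rw [trace_mul_expand]
  rw [Fintype.sum_prod_type]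
  have hstep : ∀ p : Fin d × Fin d,
      ∑ q, Q p q * Tm x q p
        = (∑ j, Q p (j, p.2) * (x j * (starRingEnd ℂ) (x p.1)))
          + (∑ l, Q p (p.1, l) * (x l * (starRingEnd ℂ) (x p.2))) := by
    intro p
    rw [Fintype.sum_prod_type]
    simp only [Tm, mul_add, Finset.sum_add_distrib, mul_ite, mul_zero]
    congr 1
    · refine Finset.sum_congr rfl fun j _ => ?_
      simp
    · rw [Finset.sum_comm]
      simp
  simp only [hstep]
  simp only [Finset.sum_add_distrib]

lemma quad_eq_trace (Q : Matrix (Fin d × Fin d) (Fin d × Fin d) ℂ) (x : Fin d → ℂ) :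
    star x ⬝ᵥ ((ptr1 Q + ptr2 Q) *ᵥ x) = (Q * Tm x).trace := by
  rw [trace_mul_Tm, Matrix.add_mulVec, dotProduct_add]
  have h1 : star x ⬝ᵥ (ptr1 Q *ᵥ x)
      = ∑ i, ∑ k, ∑ l, Q (i,k) (i,l) * (x l * (starRingEnd ℂ) (x k)) := by
    calc star x ⬝ᵥ (ptr1 Q *ᵥ x)
        = ∑ k, ∑ l, ∑ i, (starRingEnd ℂ) (x k) * (Q (i,k) (i,l) * x l) := by
          simp [dotProduct, Matrix.mulVec, ptr1, Finset.mul_sum, Finset.sum_mul, mul_assoc]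
      _ = ∑ k, ∑ i, ∑ l, (starRingEnd ℂ) (x k) * (Q (i,k) (i,l) * x l) :=
          Finset.sum_congr rfl fun k _ => Finset.sum_comm
      _ = ∑ i, ∑ k, ∑ l, (starRingEnd ℂ) (x k) * (Q (i,k) (i,l) * x l) := Finset.sum_comm
      _ = ∑ i, ∑ k, ∑ l, Q (i,k) (i,l) * (x l * (starRingEnd ℂ) (x k)) := by
          refine Finset.sum_congr rfl fun i _ => Finset.sum_congr rfl fun k _ =>
            Finset.sum_congr rfl fun l _ => by ring
  have h2 : star x ⬝ᵥ (ptr2 Q *ᵥ x)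
      = ∑ i, ∑ k, ∑ j, Q (i,k) (j,k) * (x j * (starRingEnd ℂ) (x i)) := by
    calc star x ⬝ᵥ (ptr2 Q *ᵥ x)
        = ∑ i, ∑ j, ∑ k, (starRingEnd ℂ) (x i) * (Q (i,k) (j,k) * x j) := by
          simp [dotProduct, Matrix.mulVec, ptr2, Finset.mul_sum, Finset.sum_mul, mul_assoc]
      _ = ∑ i, ∑ k, ∑ j, (starRingEnd ℂ) (x i) * (Q (i,k) (j,k) * x j) :=
          Finset.sum_congr rfl fun i _ => Finset.sum_comm
      _ = ∑ i, ∑ k, ∑ j, Q (i,k) (j,k) * (x j * (starRingEnd ℂ) (x i)) := by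
          refine Finset.sum_congr rfl fun i _ => Finset.sum_congr rfl fun k _ =>
            Finset.sum_congr rfl fun j _ => by ring
  rw [h1, h2]
  ring

lemma quad_Tm (x : Fin d → ℂ) (z : Fin d × Fin d → ℂ) :
    star z ⬝ᵥ (Tm x *ᵥ z)
      = (star (fun k => ∑ j, (starRingEnd ℂ) (x j) * z (j, k))
          ⬝ᵥ (fun k => ∑ j, (starRingEnd ℂ) (x j) * z (j, k)))
        + (star (fun i => ∑ k, (starRingEnd ℂ) (x k) * z (i, k))
          ⬝ᵥ (fun i => ∑ k, (starRingEnd ℂ) (x k) * z (i, k))) := by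
  have hrhs1 : (star (fun k => ∑ j, (starRingEnd ℂ) (x j) * z (j, k))
      ⬝ᵥ (fun k => ∑ j, (starRingEnd ℂ) (x j) * z (j, k)))
      = ∑ k, ∑ i, ∑ j, (x i * (starRingEnd ℂ) (z (i,k))) * ((starRingEnd ℂ) (x j) * z (j,k)) := by
    simp [dotProduct, Finset.sum_mul, Finset.mul_sum]
    exact Finset.sum_congr rfl fun k _ => Finset.sum_comm
  have hrhs2 : (star (fun i => ∑ k, (starRingEnd ℂ) (x k) * z (i, k))
      ⬝ᵥ (fun i => ∑ k, (starRingEnd ℂ) (x k) * z (i, k)))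
      = ∑ i, ∑ k, ∑ l, (x k * (starRingEnd ℂ) (z (i,k))) * ((starRingEnd ℂ) (x l) * z (i,l)) := by
    simp [dotProduct, Finset.sum_mul, Finset.mul_sum]
    exact Finset.sum_congr rfl fun k _ => Finset.sum_comm
  have hlhs : star z ⬝ᵥ (Tm x *ᵥ z)
      = (∑ i, ∑ k, ∑ j, (starRingEnd ℂ) (z (i,k)) * ((x i * (starRingEnd ℂ) (x j)) * z (j,k)))
        + ∑ i, ∑ k, ∑ l, (starRingEnd ℂ) (z (i,k)) * ((x k * (starRingEnd ℂ) (x l)) * z (i,l)) := by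
    have hstep : ∀ p : Fin d × Fin d,
        (Tm x *ᵥ z) p
          = (∑ j, (x p.1 * (starRingEnd ℂ) (x j)) * z (j, p.2))
            + ∑ l, (x p.2 * (starRingEnd ℂ) (x l)) * z (p.1, l) := by
      intro p
      rw [Matrix.mulVec, dotProduct, Fintype.sum_prod_type]
      simp only [Tm, add_mul, Finset.sum_add_distrib, ite_mul, zero_mul]
      congr 1
      · rw [Finset.sum_comm]
        simp
      · simp
    simp only [dotProduct, hstep, Pi.star_apply, RCLike.star_def, mul_add,
      Finset.sum_add_distrib, Finset.mul_sum, Fintype.sum_prod_type]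
  rw [hlhs, hrhs1, hrhs2]
  congr 1
  · rw [Finset.sum_comm]
    refine Finset.sum_congr rfl fun i _ => Finset.sum_congr rfl fun k _ =>
      Finset.sum_congr rfl fun j _ => by ring
  · refine Finset.sum_congr rfl fun i _ => Finset.sum_congr rfl fun k _ =>
      Finset.sum_congr rfl fun l _ => by ring

lemma trace_ptr_sum (Q : Matrix (Fin d × Fin d) (Fin d × Fin d) ℂ) :
    (ptr1 Q + ptr2 Q).trace = 2 * Q.trace := by
  have e1 : (ptr1 Q).trace = Q.trace := by
    simp only [Matrix.trace, Matrix.diag, ptr1, Fintype.sum_prod_type]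
    exact Finset.sum_comm
  have e2 : (ptr2 Q).trace = Q.trace := by
    simp only [Matrix.trace, Matrix.diag, ptr2, Fintype.sum_prod_type]
  rw [Matrix.trace_add, e1, e2]
  ring

lemma ptr_herm {Q : Matrix (Fin d × Fin d) (Fin d × Fin d) ℂ} (hQ : Q.IsHermitian) :
    (ptr1 Q + ptr2 Q).IsHermitian := by
  have happ : ∀ a b, (starRingEnd ℂ) (Q a b) = Q b a := by
    intro a b
    have := congrFun (congrFun hQ b) a
    simpa [conjTranspose_apply, RCLike.star_def] using this
  have h1 : (ptr1 Q)ᴴ = ptr1 Q := by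
    ext j k
    simp only [conjTranspose_apply, ptr1, RCLike.star_def, map_sum, happ]
  have h2 : (ptr2 Q)ᴴ = ptr2 Q := by
    ext j k
    simp only [conjTranspose_apply, ptr2, RCLike.star_def, map_sum, happ]
  show (ptr1 Q + ptr2 Q)ᴴ = ptr1 Q + ptr2 Q
  rw [conjTranspose_add, h1, h2]

lemma dot_self_real' (v : Fin d → ℂ) :
    star v ⬝ᵥ v = ((∑ i, Complex.normSq (v i) : ℝ) : ℂ) := by
  push_cast
  simp [dotProduct, Complex.normSq_eq_conj_mul_self, Pi.star_apply, RCLike.star_def]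

lemma dot_self_real2 (v : Fin d × Fin d → ℂ) :
    star v ⬝ᵥ v = ((∑ i, Complex.normSq (v i) : ℝ) : ℂ) := by
  push_cast
  simp [dotProduct, Complex.normSq_eq_conj_mul_self, Pi.star_apply, RCLike.star_def]

lemma Tm_psd (x : Fin d → ℂ) : (Tm x).PosSemidef := by
  refine .of_dotProduct_mulVec_nonneg (Tm_herm x) fun z => ?_
  rw [quad_Tm, dot_self_real', dot_self_real']
  rw [← Complex.ofReal_add]
  rw [Complex.zero_le_real]
  have g1 : (0:ℝ) ≤ ∑ i, Complex.normSq ((fun k => ∑ j, (starRingEnd ℂ) (x j) * z (j, k)) i) :=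
    Finset.sum_nonneg fun i _ => Complex.normSq_nonneg _
  have g2 : (0:ℝ) ≤ ∑ i, Complex.normSq ((fun i => ∑ k, (starRingEnd ℂ) (x k) * z (i, k)) i) :=
    Finset.sum_nonneg fun i _ => Complex.normSq_nonneg _
  linarith

lemma swap_mulVec (y : Fin d × Fin d → ℂ) (p : Fin d × Fin d) :
    (swapOp d *ᵥ y) p = y (p.2, p.1) := by
  rw [Matrix.mulVec, dotProduct, Finset.sum_eq_single (p.2, p.1)]
  · simp [swapOp]
  · intro r _ hr
    rw [swapOp, if_neg, zero_mul]
    rintro ⟨h1, h2⟩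
    exact hr (by ext <;> simp [← h1, ← h2])
  · simp

lemma Pminus_mulVec (y : Fin d × Fin d → ℂ) (p : Fin d × Fin d) :
    (Pminus d *ᵥ y) p = 2⁻¹ * (y p - y (p.2, p.1)) := by
  rw [Pminus, Matrix.smul_mulVec, Matrix.sub_mulVec, Matrix.one_mulVec]
  simp [swap_mulVec]

lemma chi_antisym (y : Fin d × Fin d → ℂ) (i j : Fin d) :
    (Pminus d *ᵥ y) (j, i) = - (Pminus d *ᵥ y) (i, j) := by
  rw [Pminus_mulVec, Pminus_mulVec]
  ring

lemma K_psd (x : Fin d → ℂ) :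
    (((∑ i, Complex.normSq (x i) : ℝ) : ℂ) • Pminus d
      - Pminus d * Tm x * Pminus d).PosSemidef := by
  refine .of_dotProduct_mulVec_nonneg ?_ ?_
  · show _ = _
    rw [conjTranspose_sub, conjTranspose_smul, conjTranspose_mul, conjTranspose_mul,
      Pm_herm, Tm_herm]
    rw [mul_assoc]
    simp [Complex.star_def, Complex.conj_ofReal, mul_assoc]
  · intro y
    set χ : Fin d × Fin d → ℂ := Pminus d *ᵥ y with hχ
    have hstarχ : star χ = star y ᵥ* Pminus d := by
      rw [hχ, star_mulVec, Pm_herm]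
    have e1 : star χ ⬝ᵥ χ = star y ⬝ᵥ (Pminus d *ᵥ y) := by
      calc star χ ⬝ᵥ χ = (star y ᵥ* Pminus d) ⬝ᵥ (Pminus d *ᵥ y) := by rw [hstarχ]
        _ = star y ⬝ᵥ (Pminus d *ᵥ (Pminus d *ᵥ y)) := (dotProduct_mulVec _ _ _).symm
        _ = star y ⬝ᵥ (Pminus d *ᵥ y) := by rw [mulVec_mulVec, Pm_idem]
    have e2 : star y ⬝ᵥ ((Pminus d * Tm x * Pminus d) *ᵥ y) = star χ ⬝ᵥ (Tm x *ᵥ χ) := by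
      calc star y ⬝ᵥ ((Pminus d * Tm x * Pminus d) *ᵥ y)
          = star y ⬝ᵥ (Pminus d *ᵥ (Tm x *ᵥ (Pminus d *ᵥ y))) := by
            rw [mulVec_mulVec, mulVec_mulVec]
        _ = (star y ᵥ* Pminus d) ⬝ᵥ (Tm x *ᵥ χ) := by rw [dotProduct_mulVec, hχ]
        _ = star χ ⬝ᵥ (Tm x *ᵥ χ) := by rw [hstarχ]
    rw [Matrix.sub_mulVec, dotProduct_sub, Matrix.smul_mulVec, dotProduct_smul, e2]
    have e3 : star χ ⬝ᵥ (Tm x *ᵥ χ)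
        = 2 * ((∑ k, Complex.normSq (∑ j, (starRingEnd ℂ) (x j) * χ (j, k)) : ℝ) : ℂ) := by
      rw [quad_Tm]
      have hw : (fun i => ∑ k, (starRingEnd ℂ) (x k) * χ (i, k))
          = fun i => - ∑ j, (starRingEnd ℂ) (x j) * χ (j, i) := by
        funext i
        rw [← Finset.sum_neg_distrib]
        refine Finset.sum_congr rfl fun k _ => ?_
        rw [show χ (i, k) = - χ (k, i) from chi_antisym y k i]
        ring
      rw [hw]
      have : star (fun i => - ∑ j, (starRingEnd ℂ) (x j) * χ (j, i))
          ⬝ᵥ (fun i => - ∑ j, (starRingEnd ℂ) (x j) * χ (j, i))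
          = star (fun i => ∑ j, (starRingEnd ℂ) (x j) * χ (j, i))
          ⬝ᵥ (fun i => ∑ j, (starRingEnd ℂ) (x j) * χ (j, i)) := by
        simp [dotProduct]
      rw [this, dot_self_real' (fun k => ∑ j, (starRingEnd ℂ) (x j) * χ (j, k))]
      ring
    rw [← e1, e3, dot_self_real2 χ]
    rw [smul_eq_mul, ← Complex.ofReal_mul, ← Complex.ofReal_ofNat, ← Complex.ofReal_mul,
      ← Complex.ofReal_sub, Complex.zero_le_real]
    have hcore := core (fun i j => χ (i, j)) (fun i j => chi_antisym y i j) (star x)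
    have hx : ∑ i, Complex.normSq (star x i) = ∑ i, Complex.normSq (x i) := by
      simp [Complex.normSq_conj]
    have hχs : ∑ p : Fin d, ∑ q : Fin d, Complex.normSq (χ (p, q))
        = ∑ p : Fin d × Fin d, Complex.normSq (χ p) := by
      rw [Fintype.sum_prod_type]
    rw [hx, hχs] at hcore
    have hsame : (∑ k, Complex.normSq (∑ j, (starRingEnd ℂ) (x j) * χ (j, k)))
        = ∑ k, Complex.normSq (∑ j, star x j * χ (j, k)) := rfl
    rw [hsame]
    exact sub_nonneg.mpr hcore


end Aux

/-- If `Q ≥ 0` is supported on the antisymmetric subspace of `ℂ^d ⊗ ℂ^d`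
(`d ≥ 2`) and `Q̃ = tr₁ Q + tr₂ Q`, then `Q̃² ≤ (1/2)·tr(Q̃)·Q̃` as operators. -/
theorem stmt3 {d : ℕ} (hd : 2 ≤ d) (Q : Matrix (Fin d × Fin d) (Fin d × Fin d) ℂ)
    (hQ : Q.PosSemidef) (hsupp : Pminus d * Q * Pminus d = Q) :
    (((2 : ℂ)⁻¹ * (ptr1 Q + ptr2 Q).trace) • (ptr1 Q + ptr2 Q)
        - (ptr1 Q + ptr2 Q) * (ptr1 Q + ptr2 Q)).PosSemidef := by
  have hctrace : (2 : ℂ)⁻¹ * (ptr1 Q + ptr2 Q).trace = Q.trace := by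
    rw [trace_ptr_sum]
    ring
  have hQP : Q * Pminus d = Q := by
    calc Q * Pminus d = Pminus d * Q * Pminus d * Pminus d := by rw [hsupp]
      _ = Pminus d * Q * (Pminus d * Pminus d) := by rw [mul_assoc]
      _ = Q := by rw [Pm_idem, hsupp]
  have hPQ : Pminus d * Q = Q := by
    calc Pminus d * Q = Pminus d * (Pminus d * Q * Pminus d) := by rw [hsupp]
      _ = Pminus d * Pminus d * Q * Pminus d := by rw [← mul_assoc, ← mul_assoc]
      _ = Q := by rw [Pm_idem, hsupp]
  have hApsd : (ptr1 Q + ptr2 Q).PosSemidef := by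
    refine .of_dotProduct_mulVec_nonneg (ptr_herm hQ.1) fun x => ?_
    rw [quad_eq_trace]
    exact trace_mul_psd_nonneg hQ (Tm_psd x)
  have hC : (Q.trace • (1 : Matrix (Fin d) (Fin d) ℂ) - (ptr1 Q + ptr2 Q)).PosSemidef := by
    refine .of_dotProduct_mulVec_nonneg ?_ ?_
    · show _ = _
      rw [conjTranspose_sub, conjTranspose_smul, conjTranspose_one, ptr_herm hQ.1,
        trace_herm_real hQ.1]
    · intro x
      rw [Matrix.sub_mulVec, dotProduct_sub, Matrix.smul_mulVec, dotProduct_smul,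
        Matrix.one_mulVec, quad_eq_trace]
      have hKtr : Q.trace • (star x ⬝ᵥ x) - (Q * Tm x).trace
          = (Q * ((star x ⬝ᵥ x) • Pminus d - Pminus d * Tm x * Pminus d)).trace := by
        rw [mul_sub, Matrix.trace_sub, mul_smul_comm, Matrix.trace_smul, hQP]
        congr 1
        · rw [smul_eq_mul, smul_eq_mul]
          ring
        · symm
          calc (Q * (Pminus d * Tm x * Pminus d)).trace
              = (Q * Pminus d * Tm x * Pminus d).trace := by rw [← mul_assoc, ← mul_assoc]
            _ = (Q * Tm x * Pminus d).trace := by rw [hQP]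
            _ = (Pminus d * (Q * Tm x)).trace := by rw [Matrix.trace_mul_comm]
            _ = (Pminus d * Q * Tm x).trace := by rw [← mul_assoc]
            _ = (Q * Tm x).trace := by rw [hPQ]
      rw [hKtr, dot_self_real' x]
      exact trace_mul_psd_nonneg hQ (K_psd x)
  rw [hctrace]
  have key : ∀ S : Matrix (Fin d) (Fin d) ℂ, Sᴴ = S → S * S = (ptr1 Q + ptr2 Q) →
      (Q.trace • (ptr1 Q + ptr2 Q) - (ptr1 Q + ptr2 Q) * (ptr1 Q + ptr2 Q)).PosSemidef := by
    intro S hSh hSS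
    have h2 := hC.conjTranspose_mul_mul_same S
    rw [hSh] at h2
    have e : S * (Q.trace • (1 : Matrix (Fin d) (Fin d) ℂ) - (ptr1 Q + ptr2 Q)) * S
        = Q.trace • (ptr1 Q + ptr2 Q) - (ptr1 Q + ptr2 Q) * (ptr1 Q + ptr2 Q) := by
      rw [mul_sub, sub_mul, mul_smul_comm, mul_one, smul_mul_assoc, hSS]
      congr 1
      rw [← hSS]
      simp only [← mul_assoc]
    rw [e] at h2
    exact h2
  open scoped MatrixOrder in
  exact key (CFC.sqrt (ptr1 Q + ptr2 Q)) (CFC.sqrt_nonneg (ptr1 Q + ptr2 Q)).posSemidef.isHermitian.eq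
    (CFC.sqrt_mul_sqrt_self (ptr1 Q + ptr2 Q) hApsd.nonneg)
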